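/- Let k ∈ ℝ and let F : (0,∞) → ℝ be continuously differentiable with lim_{L→0⁺} L²F(L) = 0. If for every Lₘ > 0, ∫₀^{Lₘ} L³F(L)/√(Lₘ²−L²) dL = 2k ∫₀^{Lₘ} L F(L) √(Lₘ²−L²) dL, then F satisfies L F′(L) = 2(k−1)F(L) for all L > 0, hence F(L) = C·L^{2(k−1)} for some constant C. -/

import Mathlib

open MeasureTheory

namespace Stmt6Aux

open MeasureTheory Set Real Filter


section
variable {L t : ℝ}

lemma setup_aux (hL : 0 < L) (hlt : L < t) :
    (∀ θ ∈ Ioo (-(π/2)) (π/2),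
      HasDerivWithinAt (fun θ => Real.sqrt ((L^2 + t^2)/2 + (t^2 - L^2)/2 * Real.sin θ))
        (((t^2 - L^2)/2) * Real.cos θ /
          (2 * Real.sqrt ((L^2 + t^2)/2 + (t^2 - L^2)/2 * Real.sin θ)))
        (Ioo (-(π/2)) (π/2)) θ) ∧
    InjOn (fun θ => Real.sqrt ((L^2 + t^2)/2 + (t^2 - L^2)/2 * Real.sin θ))
      (Ioo (-(π/2)) (π/2)) ∧
    (fun θ => Real.sqrt ((L^2 + t^2)/2 + (t^2 - L^2)/2 * Real.sin θ)) '' (Ioo (-(π/2)) (π/2))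
      = Ioo L t := by
  have hh : 0 < (t^2 - L^2)/2 := by nlinarith
  set m : ℝ := (L^2 + t^2)/2 with hm
  set h : ℝ := (t^2 - L^2)/2 with hhdef
  have hsinlt : ∀ θ ∈ Ioo (-(π/2)) (π/2), Real.sin θ < 1 ∧ -1 < Real.sin θ := by
    intro θ hθ
    constructor
    · rw [← Real.sin_pi_div_two]
      exact Real.strictMonoOn_sin ⟨hθ.1.le, hθ.2.le⟩ ⟨by linarith [hθ.1, hθ.2], le_refl _⟩ hθ.2
    · have : Real.sin (-(π/2)) < Real.sin θ :=
        Real.strictMonoOn_sin ⟨le_refl _, by linarith [hθ.1, hθ.2]⟩ ⟨hθ.1.le, hθ.2.le⟩ hθ.1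
      simpa using this
  have hrange : ∀ θ ∈ Ioo (-(π/2)) (π/2), L^2 < m + h * Real.sin θ ∧ m + h * Real.sin θ < t^2 := by
    intro θ hθ
    obtain ⟨h1, h2⟩ := hsinlt θ hθ
    constructor
    · nlinarith
    · nlinarith
  have hpos : ∀ θ ∈ Ioo (-(π/2)) (π/2), 0 < m + h * Real.sin θ := by
    intro θ hθ; have := (hrange θ hθ).1; nlinarith
  refine ⟨?_, ?_, ?_⟩
  · intro θ hθ
    have hu : HasDerivAt (fun θ => m + h * Real.sin θ) (h * Real.cos θ) θ :=
      ((Real.hasDerivAt_sin θ).const_mul h).const_add m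
    have hsq : HasDerivAt Real.sqrt (1 / (2 * Real.sqrt (m + h * Real.sin θ)))
        (m + h * Real.sin θ) := Real.hasDerivAt_sqrt (ne_of_gt (hpos θ hθ))
    have := (hsq.comp θ hu)
    have h2 : HasDerivAt (fun θ => Real.sqrt (m + h * Real.sin θ))
        (h * Real.cos θ / (2 * Real.sqrt (m + h * Real.sin θ))) θ := by
      exact this.congr_deriv (by ring)
    exact h2.hasDerivWithinAt
  · have hmono : StrictMonoOn (fun θ => Real.sqrt (m + h * Real.sin θ)) (Ioo (-(π/2)) (π/2)) := by
      intro a ha b hb hab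
      have hs : Real.sin a < Real.sin b :=
        Real.strictMonoOn_sin ⟨ha.1.le, ha.2.le⟩ ⟨hb.1.le, hb.2.le⟩ hab
      apply Real.sqrt_lt_sqrt (hpos a ha).le
      nlinarith
    exact hmono.injOn
  · ext r
    constructor
    · rintro ⟨θ, hθ, rfl⟩
      obtain ⟨h1, h2⟩ := hrange θ hθ
      constructor
      · calc L = Real.sqrt (L^2) := by rw [Real.sqrt_sq hL.le]
          _ < _ := Real.sqrt_lt_sqrt (sq_nonneg L) h1
      · calc Real.sqrt (m + h * Real.sin θ) < Real.sqrt (t^2) :=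
              Real.sqrt_lt_sqrt (hpos θ hθ).le h2
          _ = t := Real.sqrt_sq (by linarith)
    · intro hr
      have hr0 : 0 < r := lt_trans hL hr.1
      have hL2 : L^2 < r^2 := by nlinarith [hr.1]
      have ht2 : r^2 < t^2 := by nlinarith [hr.2]
      have hym : -1 < (r^2 - m)/h := by
        rw [lt_div_iff₀ hh]; nlinarith
      have hyM : (r^2 - m)/h < 1 := by
        rw [div_lt_iff₀ hh]; nlinarith
      refine ⟨Real.arcsin ((r^2 - m)/h), ⟨?_, ?_⟩, ?_⟩
      · exact Real.neg_pi_div_two_lt_arcsin.2 hym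
      · exact Real.arcsin_lt_pi_div_two.2 hyM
      · show Real.sqrt (m + h * Real.sin (Real.arcsin ((r^2-m)/h))) = r
        rw [Real.sin_arcsin hym.le hyM.le]
        have : m + h * ((r^2 - m)/h) = r^2 := by field_simp; ring
        rw [this, Real.sqrt_sq hr0.le]
end

section
variable {L t : ℝ}

lemma subst_sin (hL : 0 < L) (hlt : L < t) (g : ℝ → ℝ) :
    (∫ r in Ioo L t, g r) =
      ∫ θ in Ioo (-(π/2)) (π/2),
        |((t^2 - L^2)/2) * Real.cos θ /
            (2 * Real.sqrt ((L^2 + t^2)/2 + (t^2 - L^2)/2 * Real.sin θ))| *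
          g (Real.sqrt ((L^2 + t^2)/2 + (t^2 - L^2)/2 * Real.sin θ)) := by
  obtain ⟨hf', hinj, himg⟩ := setup_aux hL hlt
  have := integral_image_eq_integral_abs_deriv_smul measurableSet_Ioo hf' hinj g
  rw [himg] at this
  simpa [smul_eq_mul] using this

lemma subst_sin_integrable (hL : 0 < L) (hlt : L < t) (g : ℝ → ℝ) :
    IntegrableOn g (Ioo L t) ↔
      IntegrableOn (fun θ =>
        |((t^2 - L^2)/2) * Real.cos θ /
            (2 * Real.sqrt ((L^2 + t^2)/2 + (t^2 - L^2)/2 * Real.sin θ))| *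
          g (Real.sqrt ((L^2 + t^2)/2 + (t^2 - L^2)/2 * Real.sin θ)))
        (Ioo (-(π/2)) (π/2)) := by
  obtain ⟨hf', hinj, himg⟩ := setup_aux hL hlt
  have := integrableOn_image_iff_integrableOn_abs_deriv_smul measurableSet_Ioo hf' hinj g
  rw [himg] at this
  simpa [smul_eq_mul] using this

end

lemma sin_bounds {θ : ℝ} (hθ : θ ∈ Ioo (-(π/2)) (π/2)) : -1 < Real.sin θ ∧ Real.sin θ < 1 := by
  constructor
  · have : Real.sin (-(π/2)) < Real.sin θ :=
      Real.strictMonoOn_sin ⟨le_refl _, by linarith [hθ.1, hθ.2]⟩ ⟨hθ.1.le, hθ.2.le⟩ hθ.1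
    simpa using this
  · rw [← Real.sin_pi_div_two]
    exact Real.strictMonoOn_sin ⟨hθ.1.le, hθ.2.le⟩ ⟨by linarith [hθ.1, hθ.2], le_refl _⟩ hθ.2

section
variable {L t : ℝ}

lemma K1 (hL : 0 < L) (hlt : L < t) :
    IntegrableOn (fun r => r / (Real.sqrt (t^2 - r^2) * Real.sqrt (r^2 - L^2))) (Ioo L t) ∧
      ∫ r in Ioo L t, r / (Real.sqrt (t^2 - r^2) * Real.sqrt (r^2 - L^2)) = π/2 := by
  have hh : 0 < (t^2 - L^2)/2 := by nlinarith
  set g : ℝ → ℝ := fun r => r / (Real.sqrt (t^2 - r^2) * Real.sqrt (r^2 - L^2)) with hg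
  have key : ∀ θ ∈ Ioo (-(π/2)) (π/2),
      |((t^2 - L^2)/2) * Real.cos θ /
          (2 * Real.sqrt ((L^2 + t^2)/2 + (t^2 - L^2)/2 * Real.sin θ))| *
        g (Real.sqrt ((L^2 + t^2)/2 + (t^2 - L^2)/2 * Real.sin θ)) = 1/2 := by
    intro θ hθ
    obtain ⟨hs1, hs2⟩ := sin_bounds hθ
    have hcos : 0 < Real.cos θ := Real.cos_pos_of_mem_Ioo hθ
    have hu : 0 < (L^2 + t^2)/2 + (t^2 - L^2)/2 * Real.sin θ := by nlinarith
    have hfsq : Real.sqrt ((L^2 + t^2)/2 + (t^2 - L^2)/2 * Real.sin θ) ^ 2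
        = (L^2 + t^2)/2 + (t^2 - L^2)/2 * Real.sin θ := Real.sq_sqrt hu.le
    have e1 : t^2 - Real.sqrt ((L^2 + t^2)/2 + (t^2 - L^2)/2 * Real.sin θ) ^ 2
        = ((t^2 - L^2)/2) * (1 - Real.sin θ) := by rw [hfsq]; ring
    have e2 : Real.sqrt ((L^2 + t^2)/2 + (t^2 - L^2)/2 * Real.sin θ) ^ 2 - L^2
        = ((t^2 - L^2)/2) * (1 + Real.sin θ) := by rw [hfsq]; ring
    have ecos : Real.cos θ = Real.sqrt (1 - Real.sin θ) * Real.sqrt (1 + Real.sin θ) := by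
      rw [Real.cos_eq_sqrt_one_sub_sin_sq hθ.1.le hθ.2.le]
      rw [show 1 - Real.sin θ ^ 2 = (1 - Real.sin θ) * (1 + Real.sin θ) by ring]
      exact Real.sqrt_mul (by linarith) _
    simp only [hg, e1, e2]
    rw [ecos, Real.sqrt_mul hh.le, Real.sqrt_mul hh.le]
    set a := Real.sqrt (1 - Real.sin θ) with ha
    set b := Real.sqrt (1 + Real.sin θ) with hb
    set c := Real.sqrt ((L^2 + t^2)/2 + (t^2 - L^2)/2 * Real.sin θ) with hc
    set d := Real.sqrt ((t^2 - L^2)/2) with hd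
    have hapos : 0 < a := Real.sqrt_pos.2 (by linarith)
    have hbpos : 0 < b := Real.sqrt_pos.2 (by linarith)
    have hcpos : 0 < c := Real.sqrt_pos.2 hu
    have hdpos : 0 < d := Real.sqrt_pos.2 hh
    have hdd : d * d = (t^2 - L^2)/2 := Real.mul_self_sqrt hh.le
    rw [abs_of_pos (by positivity)]
    rw [← hdd]
    field_simp
  constructor
  · rw [subst_sin_integrable hL hlt g]
    exact (integrableOn_const measure_Ioo_lt_top.ne).congr_fun
      (fun θ hθ => (key θ hθ).symm) measurableSet_Ioo
  · rw [subst_sin hL hlt g, setIntegral_congr_fun measurableSet_Ioo key]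
    simp only [integral_const, MeasurableSet.univ, Measure.restrict_apply, Set.univ_inter,
      Real.volume_Ioo, smul_eq_mul]
    simp only [Measure.real, Measure.restrict_apply MeasurableSet.univ, Set.univ_inter, Real.volume_Ioo]
    rw [ENNReal.toReal_ofReal (by linarith [pi_pos])]
    ring

end

section
variable {L t : ℝ}

lemma K2 (hL : 0 < L) (hlt : L < t) :
    IntegrableOn (fun r => Real.sqrt (r^2 - L^2) * (r / Real.sqrt (t^2 - r^2))) (Ioo L t) ∧
      ∫ r in Ioo L t, Real.sqrt (r^2 - L^2) * (r / Real.sqrt (t^2 - r^2))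
        = π * (t^2 - L^2) / 4 := by
  have hh : 0 < (t^2 - L^2)/2 := by nlinarith
  set g : ℝ → ℝ := fun r => Real.sqrt (r^2 - L^2) * (r / Real.sqrt (t^2 - r^2)) with hg
  have key : ∀ θ ∈ Ioo (-(π/2)) (π/2),
      |((t^2 - L^2)/2) * Real.cos θ /
          (2 * Real.sqrt ((L^2 + t^2)/2 + (t^2 - L^2)/2 * Real.sin θ))| *
        g (Real.sqrt ((L^2 + t^2)/2 + (t^2 - L^2)/2 * Real.sin θ))
        = ((t^2 - L^2)/4) * (1 + Real.sin θ) := by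
    intro θ hθ
    obtain ⟨hs1, hs2⟩ := sin_bounds hθ
    have hcos : 0 < Real.cos θ := Real.cos_pos_of_mem_Ioo hθ
    have hu : 0 < (L^2 + t^2)/2 + (t^2 - L^2)/2 * Real.sin θ := by nlinarith
    have hfsq : Real.sqrt ((L^2 + t^2)/2 + (t^2 - L^2)/2 * Real.sin θ) ^ 2
        = (L^2 + t^2)/2 + (t^2 - L^2)/2 * Real.sin θ := Real.sq_sqrt hu.le
    have e1 : t^2 - Real.sqrt ((L^2 + t^2)/2 + (t^2 - L^2)/2 * Real.sin θ) ^ 2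
        = ((t^2 - L^2)/2) * (1 - Real.sin θ) := by rw [hfsq]; ring
    have e2 : Real.sqrt ((L^2 + t^2)/2 + (t^2 - L^2)/2 * Real.sin θ) ^ 2 - L^2
        = ((t^2 - L^2)/2) * (1 + Real.sin θ) := by rw [hfsq]; ring
    have ecos : Real.cos θ = Real.sqrt (1 - Real.sin θ) * Real.sqrt (1 + Real.sin θ) := by
      rw [Real.cos_eq_sqrt_one_sub_sin_sq hθ.1.le hθ.2.le]
      rw [show 1 - Real.sin θ ^ 2 = (1 - Real.sin θ) * (1 + Real.sin θ) by ring]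
      exact Real.sqrt_mul (by linarith) _
    simp only [hg, e1, e2]
    rw [ecos, Real.sqrt_mul hh.le, Real.sqrt_mul hh.le]
    set a := Real.sqrt (1 - Real.sin θ) with ha
    set b := Real.sqrt (1 + Real.sin θ) with hb
    set c := Real.sqrt ((L^2 + t^2)/2 + (t^2 - L^2)/2 * Real.sin θ) with hc
    set d := Real.sqrt ((t^2 - L^2)/2) with hd
    have hapos : 0 < a := Real.sqrt_pos.2 (by linarith)
    have hbpos : 0 < b := Real.sqrt_pos.2 (by linarith)
    have hcpos : 0 < c := Real.sqrt_pos.2 hu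
    have hdpos : 0 < d := Real.sqrt_pos.2 hh
    have hdd : d * d = (t^2 - L^2)/2 := Real.mul_self_sqrt hh.le
    have hbb : b * b = 1 + Real.sin θ := Real.mul_self_sqrt (by linarith)
    rw [abs_of_pos (by positivity)]
    rw [show ((t^2 - L^2)/4) * (1 + Real.sin θ) = ((t^2 - L^2)/4) * (b*b) by rw [hbb]]
    rw [show ((t^2 - L^2):ℝ) = 2 * (d*d) by rw [hdd]; ring]
    field_simp
    ring
  constructor
  · rw [subst_sin_integrable hL hlt g]
    have hcont : IntegrableOn (fun θ => ((t^2 - L^2)/4) * (1 + Real.sin θ))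
        (Ioo (-(π/2)) (π/2)) := by
      have hc : Continuous (fun θ : ℝ => ((t^2 - L^2)/4) * (1 + Real.sin θ)) := by continuity
      exact (integrableOn_Ioc_iff_integrableOn_Ioo).1 (hc.integrableOn_Ioc)
    exact hcont.congr_fun (fun θ hθ => (key θ hθ).symm) measurableSet_Ioo
  · rw [subst_sin hL hlt g, setIntegral_congr_fun measurableSet_Ioo key]
    have hle : -(π/2) ≤ π/2 := by linarith [pi_pos]
    rw [← integral_Ioc_eq_integral_Ioo, ← intervalIntegral.integral_of_le hle]
    rw [intervalIntegral.integral_const_mul]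
    rw [intervalIntegral.integral_add intervalIntegrable_const
      (Continuous.intervalIntegrable Real.continuous_sin _ _)]
    simp [integral_sin, Real.cos_pi_div_two]
    ring
end

lemma swap_triangle (t : ℝ) (ht : 0 < t) (ψ : ℝ → ℝ) (hψm : ContinuousOn ψ (Ioi 0))
    (κ : ℝ → ℝ → ℝ) (hκm : Measurable (fun p : ℝ × ℝ => κ p.1 p.2))
    (hκnn : ∀ L ∈ Ioo (0:ℝ) t, ∀ r ∈ Ioo L t, 0 ≤ κ L r)
    (I : ℝ → ℝ)
    (hI : ∀ L ∈ Ioo (0:ℝ) t, IntegrableOn (κ L) (Ioo L t) ∧ (∫ r in Ioo L t, κ L r) = I L)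
    (hII : IntegrableOn (fun L => |ψ L| * I L) (Ioo 0 t)) :
    ∫ r in Ioo 0 t, (∫ L in Ioo 0 r, ψ L * κ L r) = ∫ L in Ioo 0 t, ψ L * I L := by
  set μ1 := volume.restrict (Ioo (0:ℝ) t) with hμ1
  set Φ : ℝ × ℝ → ℝ :=
    fun p => Set.indicator {q : ℝ × ℝ | q.1 < q.2} (fun q => ψ q.1 * κ q.1 q.2) p with hΦ
  have hψm' : AEStronglyMeasurable (fun p : ℝ × ℝ => ψ p.1) (μ1.prod μ1) := by
    rw [hμ1, Measure.prod_restrict]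
    refine ContinuousOn.aestronglyMeasurable ?_ (measurableSet_Ioo.prod measurableSet_Ioo)
    exact hψm.comp continuous_fst.continuousOn (fun p hp => hp.1.1)
  have hsetm : MeasurableSet {q : ℝ × ℝ | q.1 < q.2} :=
    (isOpen_lt continuous_fst continuous_snd).measurableSet
  have hΦm : AEStronglyMeasurable Φ (μ1.prod μ1) :=
    (hψm'.mul hκm.aestronglyMeasurable).indicator hsetm
  have hsecL : ∀ L : ℝ, (fun r => Φ (L, r)) = Set.indicator (Ioi L) (fun r => ψ L * κ L r) := by
    intro L; funext r
    simp [hΦ, Set.indicator_apply, Set.mem_setOf_eq, Set.mem_Ioi]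
  have hres : ∀ L ∈ Ioo (0:ℝ) t, μ1.restrict (Ioi L) = volume.restrict (Ioo L t) := by
    intro L hL
    rw [hμ1, Measure.restrict_restrict measurableSet_Ioi]
    congr 1
    ext x; simp only [Set.mem_inter_iff, Set.mem_Ioi, Set.mem_Ioo]
    constructor
    · rintro ⟨h1, h2, h3⟩; exact ⟨h1, h3⟩
    · rintro ⟨h1, h2⟩; exact ⟨h1, lt_trans hL.1 h1, h2⟩
  have hinner : ∀ L ∈ Ioo (0:ℝ) t, ∫ r, Φ (L, r) ∂μ1 = ψ L * I L := by
    intro L hL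
    rw [hsecL L, integral_indicator measurableSet_Ioi, hres L hL,
      MeasureTheory.integral_const_mul, (hI L hL).2]
  have hnorm : ∀ L ∈ Ioo (0:ℝ) t, ∫ r, ‖Φ (L, r)‖ ∂μ1 = |ψ L| * I L := by
    intro L hL
    have : (fun r => ‖Φ (L, r)‖) = Set.indicator (Ioi L) (fun r => ‖ψ L * κ L r‖) := by
      funext r
      rw [congrFun (hsecL L) r]
      exact norm_indicator_eq_indicator_norm _ _
    rw [this, integral_indicator measurableSet_Ioi, hres L hL]
    have : ∫ r in Ioo L t, ‖ψ L * κ L r‖ = ∫ r in Ioo L t, |ψ L| * κ L r := by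
      refine setIntegral_congr_fun measurableSet_Ioo (fun r hr => ?_)
      rw [Real.norm_eq_abs, abs_mul, abs_of_nonneg (hκnn L hL r hr)]
    rw [this, MeasureTheory.integral_const_mul, (hI L hL).2]
  have hsect : ∀ᵐ L ∂μ1, Integrable (fun r => Φ (L, r)) μ1 := by
    filter_upwards [ae_restrict_mem measurableSet_Ioo] with L hL
    rw [hsecL L]
    rw [integrable_indicator_iff measurableSet_Ioi]
    have : IntegrableOn (fun r => ψ L * κ L r) (Ioo L t) := (hI L hL).1.const_mul (ψ L)
    rwa [IntegrableOn, ← hres L hL] at this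
  have hintΦ : Integrable Φ (μ1.prod μ1) := by
    refine (integrable_prod_iff hΦm).2 ⟨hsect, ?_⟩
    refine hII.congr ?_
    filter_upwards [ae_restrict_mem measurableSet_Ioo] with L hL
    exact (hnorm L hL).symm
  have hswap : ∫ L, (∫ r, Φ (L, r) ∂μ1) ∂μ1 = ∫ r, (∫ L, Φ (L, r) ∂μ1) ∂μ1 :=
    integral_integral_swap (f := fun L r => Φ (L, r)) hintΦ
  have hL : ∫ L, (∫ r, Φ (L, r) ∂μ1) ∂μ1 = ∫ L in Ioo 0 t, ψ L * I L := by
    refine integral_congr_ae ?_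
    filter_upwards [ae_restrict_mem measurableSet_Ioo] with L hL
    exact hinner L hL
  have hsecR : ∀ r : ℝ, (fun L => Φ (L, r)) = Set.indicator (Iio r) (fun L => ψ L * κ L r) := by
    intro r; funext L
    simp [hΦ, Set.indicator_apply, Set.mem_setOf_eq, Set.mem_Iio]
  have hR : ∫ r, (∫ L, Φ (L, r) ∂μ1) ∂μ1 = ∫ r in Ioo 0 t, (∫ L in Ioo 0 r, ψ L * κ L r) := by
    refine integral_congr_ae ?_
    filter_upwards [ae_restrict_mem measurableSet_Ioo] with r hr
    rw [hsecR r, integral_indicator measurableSet_Iio]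
    congr 1
    rw [hμ1, Measure.restrict_restrict measurableSet_Iio]
    congr 1
    ext x; simp only [Set.mem_inter_iff, Set.mem_Iio, Set.mem_Ioo]
    constructor
    · rintro ⟨h1, h2, h3⟩; exact ⟨h2, h1⟩
    · rintro ⟨h1, h2⟩; exact ⟨h2, h1, lt_trans h2 hr.2⟩
  rw [← hR, ← hswap, hL]

lemma hasDeriv_primitive (g : ℝ → ℝ) (hg : ContinuousOn g (Ioi 0))
    (hgi : ∀ t, 0 < t → IntegrableOn g (Ioo 0 t)) {t : ℝ} (ht : 0 < t) :
    HasDerivAt (fun u => ∫ L in Ioo 0 u, g L) (g t) t := by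
  set ε := t/2 with hε
  have hε0 : 0 < ε := by positivity
  have hεt : ε < t := by rw [hε]; linarith
  have hII : IntervalIntegrable g volume ε t := by
    rw [intervalIntegrable_iff_integrableOn_Ioc_of_le hεt.le]
    exact (hgi (t+1) (by linarith)).mono_set
      (fun x hx => ⟨lt_trans hε0 hx.1, lt_of_le_of_lt hx.2 (by linarith)⟩)
  have hmeas : StronglyMeasurableAtFilter g (nhds t) volume :=
    ⟨Ioi 0, Ioi_mem_nhds ht, hg.aestronglyMeasurable measurableSet_Ioi⟩
  have hcont : ContinuousAt g t := hg.continuousAt (Ioi_mem_nhds ht)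
  have hd : HasDerivAt (fun u => (∫ L in Ioo 0 ε, g L) + ∫ x in ε..u, g x) (g t) t :=
    (intervalIntegral.integral_hasDerivAt_right hII hmeas hcont).const_add _
  refine hd.congr_of_eventuallyEq ?_
  filter_upwards [Ioi_mem_nhds hεt] with u hu
  have hu0 : 0 < u := lt_trans hε0 hu
  have h1 : IntegrableOn g (Ioc 0 ε) := (integrableOn_Ioc_iff_integrableOn_Ioo).2 (hgi ε hε0)
  have h2 : IntegrableOn g (Ioc ε u) := (hgi (u+1) (by linarith)).mono_set
      (fun x hx => ⟨lt_trans hε0 hx.1, lt_of_le_of_lt hx.2 (by linarith)⟩)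
  have hun : Ioc (0:ℝ) ε ∪ Ioc ε u = Ioc 0 u := Set.Ioc_union_Ioc_eq_Ioc hε0.le (le_of_lt hu)
  have hdisj : Disjoint (Ioc (0:ℝ) ε) (Ioc ε u) := by
    apply Set.disjoint_left.2
    rintro x ⟨_, hx2⟩ ⟨hx3, _⟩
    exact absurd hx3 (not_lt.2 hx2)
  calc ∫ L in Ioo 0 u, g L = ∫ L in Ioc 0 u, g L := (integral_Ioc_eq_integral_Ioo).symm
    _ = (∫ L in Ioc 0 ε, g L) + ∫ L in Ioc ε u, g L := by
        rw [← hun, setIntegral_union hdisj measurableSet_Ioc h1 h2]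
    _ = (∫ L in Ioo 0 ε, g L) + ∫ x in ε..u, g x := by
        rw [integral_Ioc_eq_integral_Ioo, intervalIntegral.integral_of_le (le_of_lt hu)]

lemma swapA (t : ℝ) (ht : 0 < t) (ψ : ℝ → ℝ) (hψm : ContinuousOn ψ (Ioi 0))
    (hψi : IntegrableOn ψ (Ioo 0 t)) :
    ∫ r in Ioo 0 t, (r / Real.sqrt (t^2 - r^2)) * (∫ L in Ioo 0 r, ψ L / Real.sqrt (r^2 - L^2))
      = π/2 * ∫ L in Ioo 0 t, ψ L := by
  have hκm : Measurable (fun p : ℝ × ℝ =>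
      p.2 / (Real.sqrt (t^2 - p.2^2) * Real.sqrt (p.2^2 - p.1^2))) := by fun_prop
  have h := swap_triangle t ht ψ hψm
    (fun L r => r / (Real.sqrt (t^2 - r^2) * Real.sqrt (r^2 - L^2))) hκm
    (fun L hL r hr => div_nonneg (le_of_lt (lt_trans hL.1 hr.1))
      (mul_nonneg (Real.sqrt_nonneg _) (Real.sqrt_nonneg _)))
    (fun _ => π/2) (fun L hL => K1 hL.1 hL.2)
    ((hψi.abs.mul_const _))
  calc ∫ r in Ioo 0 t, (r / Real.sqrt (t^2 - r^2)) * (∫ L in Ioo 0 r, ψ L / Real.sqrt (r^2 - L^2))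
      = ∫ r in Ioo 0 t, (∫ L in Ioo 0 r,
          ψ L * (r / (Real.sqrt (t^2 - r^2) * Real.sqrt (r^2 - L^2)))) := by
        refine setIntegral_congr_fun measurableSet_Ioo (fun r _ => ?_)
        rw [← MeasureTheory.integral_const_mul]
        refine integral_congr_ae (Filter.Eventually.of_forall (fun L => ?_))
        ring
    _ = ∫ L in Ioo 0 t, ψ L * (π/2) := h
    _ = π/2 * ∫ L in Ioo 0 t, ψ L := by
        rw [← MeasureTheory.integral_const_mul]
        refine integral_congr_ae (Filter.Eventually.of_forall (fun L => ?_))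
        ring

lemma swapB (t : ℝ) (ht : 0 < t) (ψ : ℝ → ℝ) (hψm : ContinuousOn ψ (Ioi 0))
    (hψi : IntegrableOn ψ (Ioo 0 t)) :
    ∫ r in Ioo 0 t, (r / Real.sqrt (t^2 - r^2)) * (∫ L in Ioo 0 r, ψ L * Real.sqrt (r^2 - L^2))
      = π/4 * ∫ L in Ioo 0 t, ψ L * (t^2 - L^2) := by
  have hκm : Measurable (fun p : ℝ × ℝ =>
      Real.sqrt (p.2^2 - p.1^2) * (p.2 / Real.sqrt (t^2 - p.2^2))) := by fun_prop
  have hII : IntegrableOn (fun L => |ψ L| * (π * (t^2 - L^2) / 4)) (Ioo 0 t) := by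
    refine Integrable.mono' ((hψi.abs.const_mul (t^2)))
      ?_ ?_
    · refine ContinuousOn.aestronglyMeasurable ?_ measurableSet_Ioo
      refine ContinuousOn.mul (hψm.mono (fun x hx => hx.1)).abs ?_
      exact (Continuous.continuousOn (by continuity))
    · filter_upwards [ae_restrict_mem measurableSet_Ioo] with L hL
      have h1 : 0 ≤ t^2 - L^2 := by nlinarith [hL.1, hL.2]
      have h2 : t^2 - L^2 ≤ t^2 := by nlinarith [hL.1]
      have h3 : (0:ℝ) ≤ |ψ L| := abs_nonneg _
      rw [Real.norm_eq_abs, abs_of_nonneg (by positivity)]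
      have hπ4 : π ≤ 4 := by linarith [pi_lt_d2]
      nlinarith [mul_le_mul_of_nonneg_left h2 h3, mul_nonneg h3 h1]
  have h := swap_triangle t ht ψ hψm
    (fun L r => Real.sqrt (r^2 - L^2) * (r / Real.sqrt (t^2 - r^2))) hκm
    (fun L hL r hr => mul_nonneg (Real.sqrt_nonneg _)
      (div_nonneg (le_of_lt (lt_trans hL.1 hr.1)) (Real.sqrt_nonneg _)))
    (fun L => π * (t^2 - L^2) / 4) (fun L hL => K2 hL.1 hL.2) hII
  calc ∫ r in Ioo 0 t, (r / Real.sqrt (t^2 - r^2)) * (∫ L in Ioo 0 r, ψ L * Real.sqrt (r^2 - L^2))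
      = ∫ r in Ioo 0 t, (∫ L in Ioo 0 r,
          ψ L * (Real.sqrt (r^2 - L^2) * (r / Real.sqrt (t^2 - r^2)))) := by
        refine setIntegral_congr_fun measurableSet_Ioo (fun r _ => ?_)
        rw [← MeasureTheory.integral_const_mul]
        refine integral_congr_ae (Filter.Eventually.of_forall (fun L => ?_))
        ring
    _ = ∫ L in Ioo 0 t, ψ L * (π * (t^2 - L^2) / 4) := h
    _ = π/4 * ∫ L in Ioo 0 t, ψ L * (t^2 - L^2) := by
        rw [← MeasureTheory.integral_const_mul]
        refine integral_congr_ae (Filter.Eventually.of_forall (fun L => ?_))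
        ring

theorem main (k : ℝ) (F : ℝ → ℝ) (hF : ContDiffOn ℝ 1 F (Set.Ioi 0))
    (hlim : Filter.Tendsto (fun L => L ^ 2 * F L) (nhdsWithin 0 (Set.Ioi 0)) (nhds 0))
    (hint : ∀ Lm : ℝ, 0 < Lm →
      ∫ L in Set.Ioo 0 Lm, L ^ 3 * F L / Real.sqrt (Lm ^ 2 - L ^ 2) =
        2 * k * ∫ L in Set.Ioo 0 Lm, L * F L * Real.sqrt (Lm ^ 2 - L ^ 2)) :
    (∀ L : ℝ, 0 < L → L * deriv F L = 2 * (k - 1) * F L) ∧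
      ∃ C : ℝ, ∀ L : ℝ, 0 < L → F L = C * L ^ (2 * (k - 1)) := by
  have hFc : ContinuousOn F (Set.Ioi 0) := hF.continuousOn
  have hwc : ContinuousOn (fun L : ℝ => L ^ 3 * F L) (Set.Ioi 0) :=
    (continuous_pow 3).continuousOn.mul hFc
  have hvc : ContinuousOn (fun L : ℝ => L * F L) (Set.Ioi 0) :=
    continuous_id.continuousOn.mul hFc
  -- bound near 0 from hlim
  rw [Metric.tendsto_nhdsWithin_nhds] at hlim
  obtain ⟨δ, hδ0, hδ⟩ := hlim 1 one_pos
  have hbd : ∀ L : ℝ, 0 < L → L < δ → |L ^ 2 * F L| ≤ 1 := by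
    intro L h1 h2
    have := hδ (Set.mem_Ioi.2 h1) (by rw [Real.dist_eq, sub_zero, abs_of_pos h1]; exact h2)
    rw [Real.dist_eq, sub_zero] at this
    exact this.le
  -- integrability of w = L³F near 0 and on (0,t)
  have hwi : ∀ t : ℝ, 0 < t → IntegrableOn (fun L : ℝ => L ^ 3 * F L) (Set.Ioo 0 t) := by
    intro t ht
    have hsmall : IntegrableOn (fun L : ℝ => L ^ 3 * F L) (Set.Ioo 0 δ) := by
      refine Integrable.mono' (g := fun _ => δ) (integrableOn_const measure_Ioo_lt_top.ne)
        ((hwc.mono (fun x (hx : x ∈ Set.Ioo 0 δ) => hx.1)).aestronglyMeasurable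
          measurableSet_Ioo) ?_
      filter_upwards [ae_restrict_mem measurableSet_Ioo] with L hL
      have h1 := hbd L hL.1 hL.2
      have : |L ^ 3 * F L| = |L| * |L ^ 2 * F L| := by
        rw [← abs_mul]; ring_nf
      rw [Real.norm_eq_abs, this, abs_of_pos hL.1]
      nlinarith [hL.1, hL.2, abs_nonneg (L^2 * F L)]
    rcases le_or_gt t δ with h | h
    · exact hsmall.mono_set (Set.Ioo_subset_Ioo le_rfl h)
    · have hbig : IntegrableOn (fun L : ℝ => L ^ 3 * F L) (Set.Icc δ t) :=
        (hwc.mono (fun x hx => lt_of_lt_of_le hδ0 hx.1)).integrableOn_compact isCompact_Icc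
      refine (hsmall.union hbig).mono_set ?_
      intro x hx
      rcases lt_or_ge x δ with h' | h'
      · exact Or.inl ⟨hx.1, h'⟩
      · exact Or.inr ⟨h', hx.2.le⟩
  -- integrability of v = L·F by contradiction
  have hvi : ∀ t : ℝ, 0 < t → IntegrableOn (fun L : ℝ => L * F L) (Set.Ioo 0 t) := by
    by_contra hnc
    push_neg at hnc
    obtain ⟨t0, ht0, hni⟩ := hnc
    have hnall : ∀ r : ℝ, 0 < r → ¬ IntegrableOn (fun L : ℝ => L * F L) (Set.Ioo 0 r) := by
      intro r hr hcon
      rcases le_or_gt t0 r with h | h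
      · exact hni (hcon.mono_set (Set.Ioo_subset_Ioo le_rfl h))
      · have hbig : IntegrableOn (fun L : ℝ => L * F L) (Set.Icc r t0) :=
          (hvc.mono (fun x hx => lt_of_lt_of_le hr hx.1)).integrableOn_compact isCompact_Icc
        refine hni ((hcon.union hbig).mono_set ?_)
        intro x hx
        rcases lt_or_ge x r with h' | h'
        · exact Or.inl ⟨hx.1, h'⟩
        · exact Or.inr ⟨h', hx.2.le⟩
    have hB0 : ∀ r : ℝ, 0 < r → (∫ L in Set.Ioo 0 r, L * F L * Real.sqrt (r^2 - L^2)) = 0 := by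
      intro r hr
      apply integral_undef
      intro hcon0
      have hcon : IntegrableOn (fun L : ℝ => L * F L * Real.sqrt (r^2 - L^2))
          (Set.Ioo 0 r) := hcon0
      apply hnall (r/2) (by positivity)
      have hc2 : (0:ℝ) < r^2 - (r/2)^2 := by nlinarith
      have hcpos : 0 < Real.sqrt (r^2 - (r/2)^2) := Real.sqrt_pos.2 hc2
      have hsub : IntegrableOn (fun L : ℝ => L * F L * Real.sqrt (r^2 - L^2))
          (Set.Ioo 0 (r/2)) := hcon.mono_set (Set.Ioo_subset_Ioo le_rfl (by linarith))
      refine Integrable.mono'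
        ((hsub.abs).const_mul (1 / Real.sqrt (r^2 - (r/2)^2)))
        ((hvc.mono (fun x (hx : x ∈ Set.Ioo 0 (r/2)) => hx.1)).aestronglyMeasurable
          measurableSet_Ioo) ?_
      filter_upwards [ae_restrict_mem measurableSet_Ioo] with L hL
      have hs1 : Real.sqrt (r^2 - (r/2)^2) ≤ Real.sqrt (r^2 - L^2) :=
        Real.sqrt_le_sqrt (by nlinarith [hL.1, hL.2])
      have habs : |L * F L * Real.sqrt (r^2 - L^2)| = |L * F L| * Real.sqrt (r^2 - L^2) := by
        rw [abs_mul, abs_of_nonneg (Real.sqrt_nonneg _)]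
      rw [Real.norm_eq_abs, habs, one_div, inv_mul_eq_div, le_div_iff₀ hcpos]
      calc |L * F L| * Real.sqrt (r^2 - (r/2)^2)
          ≤ |L * F L| * Real.sqrt (r^2 - L^2) :=
            mul_le_mul_of_nonneg_left hs1 (abs_nonneg _)
        _ = _ := by ring
    -- hence the Abel transform of L³F vanishes and F ≡ 0, contradiction
    have hP0 : ∀ t : ℝ, 0 < t → (∫ L in Set.Ioo 0 t, L ^ 3 * F L) = 0 := by
      intro t ht
      have hA := swapA t ht (fun L => L ^ 3 * F L) hwc (hwi t ht)
      have hz : (∫ r in Set.Ioo 0 t, (r / Real.sqrt (t^2 - r^2)) *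
          (∫ L in Set.Ioo 0 r, L ^ 3 * F L / Real.sqrt (r^2 - L^2))) = 0 := by
        calc (∫ r in Set.Ioo 0 t, (r / Real.sqrt (t^2 - r^2)) *
            (∫ L in Set.Ioo 0 r, L ^ 3 * F L / Real.sqrt (r^2 - L^2)))
            = ∫ _r in Set.Ioo 0 t, (0:ℝ) := by
              refine setIntegral_congr_fun measurableSet_Ioo (fun r hr => ?_)
              rw [hint r hr.1, hB0 r hr.1]
              ring
          _ = 0 := by simp
      rw [hz] at hA
      have hπ : (π/2 : ℝ) ≠ 0 := by positivity
      rcases mul_eq_zero.1 hA.symm with h | h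
      · exact absurd h hπ
      · exact h
    have hF0 : ∀ x : ℝ, 0 < x → F x = 0 := by
      intro x hx
      have hd := hasDeriv_primitive (fun L => L ^ 3 * F L) hwc hwi hx
      have heq : (fun _ : ℝ => (0:ℝ)) =ᶠ[nhds x] (fun u => ∫ L in Set.Ioo 0 u, L ^ 3 * F L) := by
        filter_upwards [Ioi_mem_nhds hx] with u hu
        exact (hP0 u hu).symm
      have hd0 : HasDerivAt (fun _ : ℝ => (0:ℝ)) (x ^ 3 * F x) x := hd.congr_of_eventuallyEq heq
      have huniq := hd0.unique (hasDerivAt_const x 0)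
      have hx3 : x ^ 3 ≠ 0 := by positivity
      rcases mul_eq_zero.1 huniq with h | h
      · exact absurd h hx3
      · exact h
    apply hni
    refine (integrableOn_zero).congr_fun (fun L hL => ?_) measurableSet_Ioo
    rw [hF0 L hL.1, mul_zero]
  -- the key integral identity (1+k)·P t = k t² Q t
  have hkey : ∀ t : ℝ, 0 < t →
      (1+k) * (∫ L in Set.Ioo 0 t, L ^ 3 * F L) =
        k * t^2 * (∫ L in Set.Ioo 0 t, L * F L) := by
    intro t ht
    have hA := swapA t ht (fun L => L ^ 3 * F L) hwc (hwi t ht)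
    have hB := swapB t ht (fun L => L * F L) hvc (hvi t ht)
    have hconn : (∫ r in Set.Ioo 0 t, (r / Real.sqrt (t^2 - r^2)) *
          (∫ L in Set.Ioo 0 r, L ^ 3 * F L / Real.sqrt (r^2 - L^2)))
        = 2 * k * ∫ r in Set.Ioo 0 t, (r / Real.sqrt (t^2 - r^2)) *
          (∫ L in Set.Ioo 0 r, L * F L * Real.sqrt (r^2 - L^2)) := by
      rw [← MeasureTheory.integral_const_mul]
      refine setIntegral_congr_fun measurableSet_Ioo (fun r hr => ?_)
      rw [hint r hr.1]
      ring
    rw [hA, hB] at hconn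
    have hsplit : (∫ L in Set.Ioo 0 t, (L * F L) * (t^2 - L^2))
        = t^2 * (∫ L in Set.Ioo 0 t, L * F L) - ∫ L in Set.Ioo 0 t, L ^ 3 * F L := by
      have h1 : IntegrableOn (fun L : ℝ => t^2 * (L * F L)) (Set.Ioo 0 t) :=
        (hvi t ht).const_mul _
      rw [← MeasureTheory.integral_const_mul, ← integral_sub h1 (hwi t ht)]
      refine setIntegral_congr_fun measurableSet_Ioo (fun L _ => ?_)
      ring
    rw [hsplit] at hconn
    have hπ : (π : ℝ) ≠ 0 := pi_ne_zero
    set W := ∫ L in Set.Ioo 0 t, L ^ 3 * F L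
    set V := ∫ L in Set.Ioo 0 t, L * F L
    have E2 : π * W = π * (k * (t^2 * V - W)) := by linear_combination 2 * hconn
    have E3 : W = k * (t^2 * V - W) := mul_left_cancel₀ hπ E2
    linear_combination E3
  -- differentiate once
  have hPd : ∀ x : ℝ, 0 < x →
      HasDerivAt (fun u => ∫ L in Set.Ioo 0 u, L ^ 3 * F L) (x ^ 3 * F x) x :=
    fun x hx => hasDeriv_primitive (fun L => L ^ 3 * F L) hwc hwi hx
  have hQd : ∀ x : ℝ, 0 < x →
      HasDerivAt (fun u => ∫ L in Set.Ioo 0 u, L * F L) (x * F x) x :=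
    fun x hx => hasDeriv_primitive (fun L => L * F L) hvc hvi hx
  have hstep1 : ∀ x : ℝ, 0 < x →
      x ^ 2 * F x = 2 * k * (∫ L in Set.Ioo 0 x, L * F L) := by
    intro x hx
    have h1 : HasDerivAt (fun u => (1+k) * ∫ L in Set.Ioo 0 u, L ^ 3 * F L)
        ((1+k) * (x ^ 3 * F x)) x := (hPd x hx).const_mul _
    have h2 : HasDerivAt (fun u => k * (u^2 * (∫ L in Set.Ioo 0 u, L * F L)))
        (k * (2 * x * (∫ L in Set.Ioo 0 x, L * F L) + x^2 * (x * F x))) x := by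
      have hp : HasDerivAt (fun u : ℝ => u^2) (2 * x) x := by
        simpa using hasDerivAt_pow 2 x
      exact (hp.mul (hQd x hx)).const_mul k
    have heq : (fun u => (1+k) * ∫ L in Set.Ioo 0 u, L ^ 3 * F L)
        =ᶠ[nhds x] (fun u => k * (u^2 * (∫ L in Set.Ioo 0 u, L * F L))) := by
      filter_upwards [Ioi_mem_nhds hx] with u hu
      rw [← mul_assoc]
      exact hkey u hu
    have h2' : HasDerivAt (fun u => (1+k) * ∫ L in Set.Ioo 0 u, L ^ 3 * F L)
        (k * (2 * x * (∫ L in Set.Ioo 0 x, L * F L) + x^2 * (x * F x))) x :=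
      h2.congr_of_eventuallyEq heq
    have huniq := h1.unique h2'
    have hx0 : x ≠ 0 := hx.ne'
    apply mul_left_cancel₀ hx0
    linear_combination huniq
  -- differentiate again
  have hdF : ∀ x : ℝ, 0 < x → HasDerivAt F (deriv F x) x := by
    intro x hx
    exact ((hF.contDiffAt (isOpen_Ioi.mem_nhds hx)).differentiableAt one_ne_zero).hasDerivAt
  have hODE : ∀ x : ℝ, 0 < x → x * deriv F x = 2 * (k - 1) * F x := by
    intro x hx
    have h3 : HasDerivAt (fun u => u^2 * F u) (2 * x * F x + x^2 * deriv F x) x := by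
      have hp : HasDerivAt (fun u : ℝ => u^2) (2 * x) x := by
        simpa using hasDerivAt_pow 2 x
      exact hp.mul (hdF x hx)
    have h4 : HasDerivAt (fun u => 2 * k * (∫ L in Set.Ioo 0 u, L * F L))
        (2 * k * (x * F x)) x := (hQd x hx).const_mul _
    have heq : (fun u => u^2 * F u)
        =ᶠ[nhds x] (fun u => 2 * k * (∫ L in Set.Ioo 0 u, L * F L)) := by
      filter_upwards [Ioi_mem_nhds hx] with u hu
      exact hstep1 u hu
    have h4' : HasDerivAt (fun u => u^2 * F u) (2 * k * (x * F x)) x :=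
      h4.congr_of_eventuallyEq heq
    have huniq := h3.unique h4'
    apply mul_left_cancel₀ hx.ne'
    linear_combination huniq
  refine ⟨hODE, ?_⟩
  -- integrate the ODE
  refine ⟨F 1, fun L hL => ?_⟩
  have hg0 : ∀ x : ℝ, 0 < x →
      HasDerivAt (fun y => F y * y ^ (-(2 * (k - 1)))) 0 x := by
    intro x hx
    have hrp : HasDerivAt (fun y : ℝ => y ^ (-(2 * (k - 1))))
        (-(2 * (k - 1)) * x ^ (-(2 * (k - 1)) - 1)) x :=
      Real.hasDerivAt_rpow_const (Or.inl hx.ne')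
    have hmul := (hdF x hx).mul hrp
    have hval : deriv F x * x ^ (-(2 * (k - 1)))
        + F x * (-(2 * (k - 1)) * x ^ (-(2 * (k - 1)) - 1)) = 0 := by
      have e : x ^ (-(2 * (k - 1)) - 1) = x ^ (-(2 * (k - 1))) / x := by
        rw [Real.rpow_sub hx, Real.rpow_one]
      rw [e]
      have hOD := hODE x hx
      field_simp
      linear_combination x ^ (-(2 * (k - 1))) * hOD
    rw [hval] at hmul
    exact hmul
  have hgconst : F L * L ^ (-(2 * (k - 1))) = F 1 * (1:ℝ) ^ (-(2 * (k - 1))) := by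
    set a := min L 1 with ha
    set b := max L 1 with hb
    have ha0 : 0 < a := lt_min hL one_pos
    have hab : a ≤ b := min_le_max
    have hconst := constant_of_has_deriv_right_zero
      (f := fun y => F y * y ^ (-(2 * (k - 1)))) (a := a) (b := b)
      (fun x hx => ((hg0 x (lt_of_lt_of_le ha0 hx.1)).continuousAt).continuousWithinAt)
      (fun x hx => (hg0 x (lt_of_lt_of_le ha0 hx.1)).hasDerivWithinAt)
    have h1 := hconst L ⟨min_le_left _ _, le_max_left _ _⟩
    have h2 := hconst 1 ⟨min_le_right _ _, le_max_right _ _⟩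
    exact h1.trans h2.symm
  rw [Real.one_rpow, mul_one] at hgconst
  have hLp : L ^ (-(2 * (k - 1))) * L ^ (2 * (k - 1)) = 1 := by
    rw [← Real.rpow_add hL]
    simp
  calc F L = F L * (L ^ (-(2 * (k - 1))) * L ^ (2 * (k - 1))) := by rw [hLp, mul_one]
    _ = (F L * L ^ (-(2 * (k - 1)))) * L ^ (2 * (k - 1)) := by ring
    _ = F 1 * L ^ (2 * (k - 1)) := by rw [hgconst]

end Stmt6Aux

/-- If F is C¹ on (0,∞), L²F(L) → 0 as L → 0⁺, and for every Lₘ > 0 the integral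
identity ∫₀^{Lₘ} L³F/√(Lₘ²−L²) = 2k ∫₀^{Lₘ} LF√(Lₘ²−L²) holds, then
L F′(L) = 2(k−1)F(L) on (0,∞), hence F(L) = C·L^(2(k−1)) for some constant C. -/
theorem stmt_6 (k : ℝ) (F : ℝ → ℝ) (hF : ContDiffOn ℝ 1 F (Set.Ioi 0))
    (hlim : Filter.Tendsto (fun L => L ^ 2 * F L) (nhdsWithin 0 (Set.Ioi 0)) (nhds 0))
    (hint : ∀ Lm : ℝ, 0 < Lm →
      ∫ L in Set.Ioo 0 Lm, L ^ 3 * F L / Real.sqrt (Lm ^ 2 - L ^ 2) =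
        2 * k * ∫ L in Set.Ioo 0 Lm, L * F L * Real.sqrt (Lm ^ 2 - L ^ 2)) :
    (∀ L : ℝ, 0 < L → L * deriv F L = 2 * (k - 1) * F L) ∧
      ∃ C : ℝ, ∀ L : ℝ, 0 < L → F L = C * L ^ (2 * (k - 1)) :=
  Stmt6Aux.main k F hF hlim hint
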